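/- Let (M,d) be a complete cone metric space over a normal cone P with normal constant K, and let T,S : M → M with S a T-Zamfirescu mapping. Then for every x₀ ∈ M, the sequence (TSⁿx₀) is Cauchy in M and hence converges to some y₀ ∈ M. -/

import Mathlib

open Filter Topology

variable {E : Type*}

/-- A cone in a real Banach space. -/
def IsCone [NormedAddCommGroup E] [NormedSpace ℝ E] (P : Set E) : Prop :=
  IsClosed P ∧ P.Nonempty ∧ P ≠ {0} ∧
  (∀ (a b : ℝ), 0 ≤ a → 0 ≤ b → ∀ x ∈ P, ∀ y ∈ P, a • x + b • y ∈ P) ∧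
  (∀ x, x ∈ P → -x ∈ P → x = 0)

/-- The partial order induced by the cone `P`: `x ≤ y` iff `y - x ∈ P`. -/
def coneLe [NormedAddCommGroup E] (P : Set E) (x y : E) : Prop := y - x ∈ P

/-- `x ≪ y` iff `y - x ∈ int P`. -/
def coneLt [NormedAddCommGroup E] (P : Set E) (x y : E) : Prop := y - x ∈ interior P

/-- A normal cone with normal constant `K`. -/
def IsNormalCone [NormedAddCommGroup E] (P : Set E) (K : ℝ) : Prop :=
  0 < K ∧ ∀ x y : E, coneLe P 0 x → coneLe P x y → ‖x‖ ≤ K * ‖y‖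

/-- A cone metric on `M` with values in `E`, relative to the cone `P`. -/
def IsConeMetric [NormedAddCommGroup E] {M : Type*} (P : Set E) (d : M → M → E) : Prop :=
  (∀ x y : M, coneLe P 0 (d x y)) ∧
  (∀ x y : M, d x y = 0 ↔ x = y) ∧
  (∀ x y : M, d x y = d y x) ∧
  (∀ x y z : M, coneLe P (d x y) (d x z + d z y))

/-- Convergence of a sequence in a cone metric space. -/
def ConeConverges [NormedAddCommGroup E] {M : Type*} (P : Set E) (d : M → M → E)
    (s : ℕ → M) (x : M) : Prop :=
  ∀ c : E, coneLt P 0 c → ∃ n₀ : ℕ, ∀ n > n₀, coneLt P (d (s n) x) c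

/-- Cauchy sequence in a cone metric space. -/
def ConeCauchy [NormedAddCommGroup E] {M : Type*} (P : Set E) (d : M → M → E)
    (s : ℕ → M) : Prop :=
  ∀ c : E, coneLt P 0 c → ∃ n₀ : ℕ, ∀ n ≥ n₀, ∀ m ≥ n₀, coneLt P (d (s n) (s m)) c

/-- Completeness of a cone metric space. -/
def ConeComplete [NormedAddCommGroup E] {M : Type*} (P : Set E) (d : M → M → E) : Prop :=
  ∀ s : ℕ → M, ConeCauchy P d s → ∃ x : M, ConeConverges P d s x

/-- Continuity of a self-map of a cone metric space. -/
def ConeContinuous [NormedAddCommGroup E] {M : Type*} (P : Set E) (d : M → M → E)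
    (T : M → M) : Prop :=
  ∀ (s : ℕ → M) (x : M), ConeConverges P d s x → ConeConverges P d (fun n => T (s n)) (T x)

/-- `T` is subsequentially convergent. -/
def SubseqConvergent [NormedAddCommGroup E] {M : Type*} (P : Set E) (d : M → M → E)
    (T : M → M) : Prop :=
  ∀ s : ℕ → M, (∃ y, ConeConverges P d (fun n => T (s n)) y) →
    ∃ φ : ℕ → ℕ, StrictMono φ ∧ ∃ z, ConeConverges P d (fun n => s (φ n)) z

/-- `T` is sequentially convergent. -/
def SeqConvergent [NormedAddCommGroup E] {M : Type*} (P : Set E) (d : M → M → E)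
    (T : M → M) : Prop :=
  ∀ s : ℕ → M, (∃ y, ConeConverges P d (fun n => T (s n)) y) →
    ∃ z, ConeConverges P d s z

/-- `S` is a `T`-Zamfirescu mapping. -/
def TZamfirescu [NormedAddCommGroup E] [NormedSpace ℝ E] {M : Type*} (P : Set E)
    (d : M → M → E) (T S : M → M) : Prop :=
  ∃ a b c : ℝ, 0 ≤ a ∧ a < 1 ∧ 0 ≤ b ∧ b < 1/2 ∧ 0 ≤ c ∧ c < 1/2 ∧
    ∀ x y : M,
      coneLe P (d (T (S x)) (T (S y))) (a • d (T x) (T y)) ∨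
      coneLe P (d (T (S x)) (T (S y))) (b • (d (T x) (T (S x)) + d (T y) (T (S y)))) ∨
      coneLe P (d (T (S x)) (T (S y))) (c • (d (T x) (T (S y)) + d (T y) (T (S x))))

/-- `S` is a `T`-weak contraction. -/
def TWeakContraction [NormedAddCommGroup E] [NormedSpace ℝ E] {M : Type*} (P : Set E)
    (d : M → M → E) (T S : M → M) : Prop :=
  ∃ δ L : ℝ, 0 < δ ∧ δ < 1 ∧ 0 ≤ L ∧
    ∀ x y : M, coneLe P (d (T (S x)) (T (S y))) (δ • d (T x) (T y) + L • d (T y) (T (S x)))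

section ConeHelpers
variable {E : Type*} [NormedAddCommGroup E] [NormedSpace ℝ E] {P : Set E}

lemma IsCone.zero_mem' (hP : IsCone P) : (0:E) ∈ P := by
  obtain ⟨x, hx⟩ := hP.2.1
  have := hP.2.2.2.1 0 0 le_rfl le_rfl x hx x hx
  simpa using this

lemma IsCone.add_mem' (hP : IsCone P) {x y : E} (hx : x ∈ P) (hy : y ∈ P) : x + y ∈ P := by
  have := hP.2.2.2.1 1 1 zero_le_one zero_le_one x hx y hy
  simpa using this

lemma IsCone.smul_mem' (hP : IsCone P) {a : ℝ} (ha : 0 ≤ a) {x : E} (hx : x ∈ P) : a • x ∈ P := by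
  have := hP.2.2.2.1 a 0 ha le_rfl x hx x hx
  simpa using this

lemma coneLe_refl' (hP : IsCone P) (x : E) : coneLe P x x := by
  simpa [coneLe] using hP.zero_mem'

lemma coneLe_trans' (hP : IsCone P) {x y z : E} (h1 : coneLe P x y) (h2 : coneLe P y z) :
    coneLe P x z := by
  have := hP.add_mem' h2 h1
  simpa [coneLe] using this

lemma coneLe_add' (hP : IsCone P) {x y x' y' : E} (h1 : coneLe P x y) (h2 : coneLe P x' y') :
    coneLe P (x + x') (y + y') := by
  have := hP.add_mem' h1 h2
  unfold coneLe at *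
  convert this using 1
  abel

lemma coneLe_smul' (hP : IsCone P) {a : ℝ} (ha : 0 ≤ a) {x y : E} (h : coneLe P x y) :
    coneLe P (a • x) (a • y) := by
  have := hP.smul_mem' ha h
  unfold coneLe at *
  convert this using 1
  module

lemma smul_coneLe_smul' (hP : IsCone P) {s t : ℝ} (hst : s ≤ t) {x : E} (hx : coneLe P 0 x) :
    coneLe P (s • x) (t • x) := by
  unfold coneLe at *
  rw [sub_zero] at hx
  have := hP.smul_mem' (sub_nonneg.2 hst) hx
  convert this using 1
  module

/-- From z ≤ b•z + b•y with b < 1, conclude z ≤ (b/(1-b))•y. -/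
lemma cone_solve (hP : IsCone P) {b : ℝ} (hb0 : 0 ≤ b) (hb1 : b < 1) {y z : E}
    (h : coneLe P z (b • z + b • y)) : coneLe P z ((b / (1 - b)) • y) := by
  unfold coneLe at *
  have h1 : (0:ℝ) < 1 - b := by linarith
  have := hP.smul_mem' (le_of_lt (by positivity : (0:ℝ) < 1 / (1 - b))) h
  convert this using 1
  match_scalars <;> field_simp <;> ring

/-- If 0 ≪ c, then every vector of small norm is ≪ c. -/
lemma coneLt_of_small (hc : coneLt P 0 c) :
    ∃ ε > 0, ∀ z : E, ‖z‖ < ε → coneLt P z c := by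
  rw [coneLt, sub_zero] at hc
  obtain ⟨ε, hε, hball⟩ := Metric.mem_nhds_iff.1 (mem_interior_iff_mem_nhds.1 hc)
  refine ⟨ε / 2, by positivity, fun z hz => ?_⟩
  rw [coneLt]
  have : Metric.ball (c - z) (ε / 2) ⊆ P := fun w hw => by
    apply hball
    rw [Metric.mem_ball] at hw ⊢
    calc dist w c ≤ dist w (c - z) + dist (c - z) c := dist_triangle _ _ _
      _ < ε / 2 + ε / 2 := by
          apply add_lt_add hw
          simpa [dist_eq_norm] using hz
      _ = ε := by ring
  exact mem_interior.2 ⟨_, this, Metric.isOpen_ball, Metric.mem_ball_self (by positivity)⟩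

/-- The key contraction step. -/
lemma tz_step {M : Type*} (hP : IsCone P) {d : M → M → E} (hd : IsConeMetric P d)
    {T S : M → M} (hTZ : TZamfirescu P d T S) :
    ∃ δ : ℝ, 0 ≤ δ ∧ δ < 1 ∧
      ∀ x : M, coneLe P (d (T (S (S x))) (T (S x))) (δ • d (T (S x)) (T x)) := by
  obtain ⟨a, b, c, ha0, ha1, hb0, hb1, hc0, hc1, h⟩ := hTZ
  set δ : ℝ := max a (max (b / (1 - b)) (c / (1 - c))) with hδdef
  have hb1' : (0:ℝ) < 1 - b := by linarith
  have hc1' : (0:ℝ) < 1 - c := by linarith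
  have hδ0 : 0 ≤ δ := le_trans ha0 (le_max_left _ _)
  have hδ1 : δ < 1 := by
    apply max_lt ha1 (max_lt ?_ ?_)
    · rw [div_lt_one hb1']; linarith
    · rw [div_lt_one hc1']; linarith
  refine ⟨δ, hδ0, hδ1, fun x => ?_⟩
  have hsym := hd.2.2.1
  -- goal: D(Sx) ≤ δ • D x where D y = d (T (S y)) (T y)
  have bound : coneLe P (d (T (S (S x))) (T (S x))) (δ • d (T (S x)) (T x)) := by
    rcases h (S x) x with h1 | h2 | h3
    · -- case a
      have : coneLe P (d (T (S (S x))) (T (S x))) (a • d (T (S x)) (T x)) := h1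
      exact coneLe_trans' hP this
        (smul_coneLe_smul' hP (le_max_left _ _) (hd.1 _ _))
    · -- case b : d(TS Sx, TSx) ≤ b (d(TSx, TS Sx) + d(Tx, TSx))
      have h2' : coneLe P (d (T (S (S x))) (T (S x)))
          (b • d (T (S (S x))) (T (S x)) + b • d (T (S x)) (T x)) := by
        rw [smul_add] at h2
        rw [hsym (T (S x)) (T (S (S x))), hsym (T x) (T (S x))] at h2
        exact h2
      have := cone_solve hP hb0 (by linarith) h2'
      exact coneLe_trans' hP this
        (smul_coneLe_smul' hP (le_trans (le_max_left _ _) (le_max_right _ _)) (hd.1 _ _))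
    · -- case c : ≤ c (d(TSx, TSx) + d(Tx, TS Sx)) = c d(Tx, TS Sx)
      have hself : d (T (S x)) (T (S x)) = 0 := (hd.2.1 _ _).2 rfl
      rw [hself, zero_add] at h3
      -- d(Tx, TS Sx) ≤ d(Tx, TSx) + d(TSx, TS Sx)
      have htri := hd.2.2.2 (T x) (T (S (S x))) (T (S x))
      have h3' : coneLe P (d (T (S (S x))) (T (S x)))
          (c • (d (T x) (T (S x)) + d (T (S x)) (T (S (S x))))) :=
        coneLe_trans' hP h3 (coneLe_smul' hP hc0 htri)
      have h3'' : coneLe P (d (T (S (S x))) (T (S x)))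
          (c • d (T (S (S x))) (T (S x)) + c • d (T (S x)) (T x)) := by
        rw [smul_add] at h3'
        rw [hsym (T x) (T (S x)), hsym (T (S x)) (T (S (S x)))] at h3'
        rw [add_comm] at h3'
        exact h3'
      have := cone_solve hP hc0 (by linarith) h3''
      exact coneLe_trans' hP this
        (smul_coneLe_smul' hP (le_trans (le_max_right _ _) (le_max_right _ _)) (hd.1 _ _))
  exact bound

end ConeHelpers

theorem tz_iterates_cauchy_and_converge {E M : Type*} [NormedAddCommGroup E]
    [NormedSpace ℝ E] [CompleteSpace E] (P : Set E) (K : ℝ) (hP : IsCone P)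
    (hK : IsNormalCone P K) (d : M → M → E) (hd : IsConeMetric P d)
    (hcomp : ConeComplete P d) (T S : M → M) (hTZ : TZamfirescu P d T S) :
    ∀ x₀ : M, ConeCauchy P d (fun n => T (S^[n] x₀)) ∧
      ∃ y₀ : M, ConeConverges P d (fun n => T (S^[n] x₀)) y₀ := by

  intro x₀
  obtain ⟨δ, hδ0, hδ1, hstep⟩ := tz_step hP hd hTZ
  set D₀ : E := d (T (S x₀)) (T x₀) with hD₀
  have hD₀P : coneLe P 0 D₀ := hd.1 _ _
  have h1δ : (0:ℝ) < 1 - δ := by linarith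
  -- consecutive distances
  have key1 : ∀ n, coneLe P (d (T (S^[n+1] x₀)) (T (S^[n] x₀))) (δ ^ n • D₀) := by
    intro n
    induction n with
    | zero => simpa using coneLe_refl' hP D₀
    | succ n ih =>
        have h1 := hstep (S^[n] x₀)
        rw [← Function.iterate_succ_apply' S n x₀] at h1
        rw [← Function.iterate_succ_apply' S (n+1) x₀] at h1
        have h2 : coneLe P (δ • d (T (S^[n+1] x₀)) (T (S^[n] x₀))) (δ • (δ ^ n • D₀)) :=
          coneLe_smul' hP hδ0 ih
        have := coneLe_trans' hP h1 h2
        rw [smul_smul] at this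
        have e : δ * δ ^ n = δ ^ (n + 1) := by ring
        rwa [e] at this
  -- distances between x_n and x_{n+k}
  have key2 : ∀ n k, coneLe P (d (T (S^[n] x₀)) (T (S^[n+k] x₀)))
      ((∑ i ∈ Finset.range k, δ ^ (n + i)) • D₀) := by
    intro n k
    induction k with
    | zero =>
        simp only [Nat.add_zero, Finset.range_zero, Finset.sum_empty, zero_smul]
        have : d (T (S^[n] x₀)) (T (S^[n] x₀)) = 0 := (hd.2.1 _ _).2 rfl
        rw [this]
        exact coneLe_refl' hP 0
    | succ k ih =>
        have htri := hd.2.2.2 (T (S^[n] x₀)) (T (S^[n+(k+1)] x₀)) (T (S^[n+k] x₀))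
        have hlast : coneLe P (d (T (S^[n+k] x₀)) (T (S^[n+(k+1)] x₀))) (δ ^ (n+k) • D₀) := by
          rw [hd.2.2.1]
          exact key1 (n + k)
        have hsum := coneLe_add' hP ih hlast
        have := coneLe_trans' hP htri hsum
        rwa [Finset.sum_range_succ, add_smul]
  -- coefficient bound
  have hgeo : ∀ n k, (∑ i ∈ Finset.range k, δ ^ (n + i)) ≤ δ ^ n / (1 - δ) := by
    intro n k
    have h1 : (∑ i ∈ Finset.range k, δ ^ (n + i)) = δ ^ n * ∑ i ∈ Finset.range k, δ ^ i := by
      rw [Finset.mul_sum]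
      exact Finset.sum_congr rfl fun i _ => by rw [pow_add]
    have h2 : (∑ i ∈ Finset.range k, δ ^ i) ≤ 1 / (1 - δ) := by
      rw [geom_sum_eq (ne_of_lt hδ1)]
      have h3 : (δ ^ k - 1) / (δ - 1) = (1 - δ ^ k) / (1 - δ) := by
        rw [← neg_div_neg_eq]; ring_nf
      rw [h3, div_le_div_iff₀ h1δ h1δ]
      nlinarith [pow_nonneg hδ0 k]
    calc (∑ i ∈ Finset.range k, δ ^ (n + i)) = δ ^ n * ∑ i ∈ Finset.range k, δ ^ i := h1
      _ ≤ δ ^ n * (1 / (1 - δ)) := by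
          apply mul_le_mul_of_nonneg_left h2 (pow_nonneg hδ0 n)
      _ = δ ^ n / (1 - δ) := by ring
  -- distance bound
  have key3 : ∀ n k, coneLe P (d (T (S^[n] x₀)) (T (S^[n+k] x₀))) ((δ ^ n / (1 - δ)) • D₀) :=
    fun n k => coneLe_trans' hP (key2 n k) (smul_coneLe_smul' hP (hgeo n k) hD₀P)
  -- norm bound, for n ≤ m
  set C : ℝ := K * ‖D₀‖ / (1 - δ) with hC
  have key4 : ∀ n m, n ≤ m → ‖d (T (S^[n] x₀)) (T (S^[m] x₀))‖ ≤ C * δ ^ n := by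
    intro n m hnm
    obtain ⟨k, rfl⟩ := Nat.exists_eq_add_of_le hnm
    have := hK.2 _ _ (hd.1 _ _) (key3 n k)
    rw [norm_smul] at this
    have habs : |δ ^ n / (1 - δ)| = δ ^ n / (1 - δ) := abs_of_nonneg (by positivity)
    rw [Real.norm_eq_abs, habs] at this
    calc ‖d (T (S^[n] x₀)) (T (S^[n+k] x₀))‖ ≤ K * (δ ^ n / (1 - δ) * ‖D₀‖) := this
      _ = C * δ ^ n := by rw [hC]; ring
  have key5 : ∀ n m, ‖d (T (S^[n] x₀)) (T (S^[m] x₀))‖ ≤ C * δ ^ min n m := by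
    intro n m
    rcases le_total n m with h | h
    · rw [min_eq_left h]; exact key4 n m h
    · rw [min_eq_right h, hd.2.2.1]; exact key4 m n h
  -- Cauchy
  have hcauchy : ConeCauchy P d (fun n => T (S^[n] x₀)) := by
    intro c hc
    obtain ⟨ε, hε, hsmall⟩ := coneLt_of_small hc
    have htend : Filter.Tendsto (fun n => C * δ ^ n) Filter.atTop (nhds 0) := by
      have := tendsto_pow_atTop_nhds_zero_of_lt_one hδ0 hδ1
      simpa using this.const_mul C
    obtain ⟨n₀, hn₀⟩ := (htend.eventually (gt_mem_nhds hε)).exists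
    refine ⟨n₀, fun n hn m hm => ?_⟩
    apply hsmall
    have hmin : n₀ ≤ min n m := le_min hn hm
    have hCpos : 0 ≤ C :=
      div_nonneg (mul_nonneg hK.1.le (norm_nonneg _)) h1δ.le
    calc ‖d (T (S^[n] x₀)) (T (S^[m] x₀))‖ ≤ C * δ ^ min n m := key5 n m
      _ ≤ C * δ ^ n₀ := by
          apply mul_le_mul_of_nonneg_left _ hCpos
          exact pow_le_pow_of_le_one hδ0 (le_of_lt hδ1) hmin
      _ < ε := hn₀
  exact ⟨hcauchy, hcomp _ hcauchy⟩
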